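/- arXiv:0707.1729 — 2 statements merged into one kernel-verified Lean document; each statement's English description precedes it below -/
import Mathlib

section
/- Quantum value bound for transversal XOR games: let π be a probability distribution on {0,1}^n × {0,1}^l, g : {0,1}^n × {0,1}^l → {0,1}, |φ⟩ a unit vector in H_A ⊗ H_B, and for each s, t ∈ {0,1}^n let A_s and B_t be Hermitian operators with all eigenvalues in {−1, 1} on H_A and H_B respectively. Define θ_z = Σ_r π(z,r)(1/2)(-1)^{g(z,r)}. Then 1/2 + Σ_{z ∈ {0,1}^n} θ_z · 2^{-n} Σ_{s ∈ {0,1}^n} ⟨φ| A_s ⊗ B_{s⊕z} |φ⟩ ≤ 1/2 + max_{u ∈ {0,1}^n} |Σ_z (-1)^{u·z} θ_z|. -/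
open scoped Kronecker
open Matrix Finset

namespace TXQB

/-- The ±1 character of `ZMod 2`. -/
def E (a : ZMod 2) : ℝ := (-1 : ℝ) ^ a.val

lemma E_zero : E 0 = 1 := by simp [E]

lemma E_add (a b : ZMod 2) : E (a + b) = E a * E b := by
  unfold E
  rw [ZMod.val_add, ← neg_one_pow_eq_pow_mod_two, pow_add]

lemma E_sum {ι : Type*} (s : Finset ι) (f : ι → ZMod 2) :
    E (∑ i ∈ s, f i) = ∏ i ∈ s, E (f i) := by
  classical
  induction s using Finset.induction with
  | empty => simp [E_zero]
  | insert _ _ h ih => rw [Finset.sum_insert h, Finset.prod_insert h, E_add, ih]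

variable {n : ℕ}

/-- `ee u z = (-1)^(u·z)`. -/
def ee (u z : Fin n → ZMod 2) : ℝ := E (∑ i, u i * z i)

lemma ee_mul (u z z' : Fin n → ZMod 2) : ee u z * ee u z' = ee u (z + z') := by
  unfold ee
  rw [← E_add]
  congr 1
  rw [← Finset.sum_add_distrib]
  refine Finset.sum_congr rfl fun i _ => ?_
  simp [Pi.add_apply, mul_add]

lemma sum_univ_zmod (f : ZMod 2 → ℝ) : ∑ a : ZMod 2, f a = f 0 + f 1 := by
  have : (Finset.univ : Finset (ZMod 2)) = {0, 1} := by decide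
  rw [this, Finset.sum_insert (by decide), Finset.sum_singleton]

lemma sum_ee (z : Fin n → ZMod 2) :
    ∑ u : Fin n → ZMod 2, ee u z = if z = 0 then (2 : ℝ) ^ n else 0 := by
  classical
  have h1 : ∀ u : Fin n → ZMod 2, ee u z = ∏ i, E (u i * z i) := fun u => E_sum _ _
  simp_rw [h1]
  rw [← Fintype.piFinset_univ,
    Finset.sum_prod_piFinset (Finset.univ : Finset (ZMod 2)) (fun i a => E (a * z i))]
  have hfac : ∀ c : ZMod 2, (∑ a : ZMod 2, E (a * c)) = if c = 0 then 2 else 0 := by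
    intro c
    rw [sum_univ_zmod]
    rcases (by decide : ∀ c : ZMod 2, c = 0 ∨ c = 1) c with rfl | rfl <;> norm_num [E, show ZMod.val (1 : ZMod 2) = 1 from rfl]
  simp_rw [hfac]
  by_cases hz : z = 0
  · subst hz
    simp
  · rw [if_neg hz]
    obtain ⟨i, hi⟩ := Function.ne_iff.mp hz
    exact Finset.prod_eq_zero (Finset.mem_univ i) (by rw [if_neg (by simpa using hi)])

end TXQB

namespace TXQB

open Matrix

lemma sum_comm3 {α β γ M : Type*} [AddCommMonoid M] [Fintype α] [Fintype β] [Fintype γ]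
    (f : α → β → γ → M) :
    ∑ a, ∑ b, ∑ c, f a b c = ∑ b, ∑ c, ∑ a, f a b c := by
  rw [Finset.sum_comm]
  exact Finset.sum_congr rfl fun b _ => Finset.sum_comm

lemma hiff {n : ℕ} (s t : Fin n → ZMod 2) : s + t = 0 ↔ s = t := by
  constructor
  · intro h
    funext i
    exact (by decide : ∀ a b : ZMod 2, a + b = 0 → a = b) _ _ (congrFun h i)
  · rintro rfl
    funext i
    exact (by decide : ∀ a : ZMod 2, a + a = 0) _

lemma card_V (n : ℕ) : Fintype.card (Fin n → ZMod 2) = 2 ^ n := by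
  simp [Fintype.card_fun, ZMod.card]

lemma two_pow_ne (n : ℕ) : ((2 : ℂ) ^ n) ≠ 0 := pow_ne_zero _ two_ne_zero

section Mat

set_option linter.unusedSectionVars false

variable {n : ℕ} {ι κ : Type} [Fintype ι] [DecidableEq ι] [Fintype κ] [DecidableEq κ]

lemma sum_kron {σ : Type*} (F : Finset σ) (M : σ → Matrix ι ι ℂ) (N : Matrix κ κ ℂ) :
    (∑ s ∈ F, M s) ⊗ₖ N = ∑ s ∈ F, M s ⊗ₖ N := by
  ext ⟨i, j⟩ ⟨k, l⟩
  simp [Matrix.kroneckerMap_apply, Matrix.sum_apply, Finset.sum_mul]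

lemma kron_sum {σ : Type*} (F : Finset σ) (M : Matrix ι ι ℂ) (N : σ → Matrix κ κ ℂ) :
    M ⊗ₖ (∑ s ∈ F, N s) = ∑ s ∈ F, M ⊗ₖ N s := by
  ext ⟨i, j⟩ ⟨k, l⟩
  simp [Matrix.kroneckerMap_apply, Matrix.sum_apply, Finset.mul_sum]

lemma kron_conjTranspose (M : Matrix ι ι ℂ) (N : Matrix κ κ ℂ) :
    (M ⊗ₖ N)ᴴ = Mᴴ ⊗ₖ Nᴴ := by
  ext ⟨i, j⟩ ⟨k, l⟩
  simp [Matrix.kroneckerMap_apply, Matrix.conjTranspose_apply, mul_comm]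

/-- The Fourier transform of a family of matrices indexed by `Fin n → ZMod 2`. -/
noncomputable def hat (A : (Fin n → ZMod 2) → Matrix ι ι ℂ) (u : Fin n → ZMod 2) :
    Matrix ι ι ℂ :=
  ((2 : ℂ) ^ n)⁻¹ • ∑ s, ((ee u s : ℝ) : ℂ) • A s

lemma hat_herm (A : (Fin n → ZMod 2) → Matrix ι ι ℂ) (hA : ∀ s, (A s).IsHermitian)
    (u : Fin n → ZMod 2) : (hat A u).IsHermitian := by
  unfold Matrix.IsHermitian hat
  rw [Matrix.conjTranspose_smul, Matrix.conjTranspose_sum]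
  have h2 : star ((2 : ℂ) ^ n)⁻¹ = ((2 : ℂ) ^ n)⁻¹ := by simp
  rw [h2]
  congr 1
  refine Finset.sum_congr rfl fun s _ => ?_
  rw [Matrix.conjTranspose_smul, Complex.star_def, Complex.conj_ofReal, hA s]

lemma sum_hat_sq (A : (Fin n → ZMod 2) → Matrix ι ι ℂ) (hA2 : ∀ s, A s * A s = 1) :
    ∑ u : Fin n → ZMod 2, hat A u * hat A u = 1 := by
  have expand : ∀ u : Fin n → ZMod 2, hat A u * hat A u =
      (((2 : ℂ) ^ n)⁻¹ * ((2 : ℂ) ^ n)⁻¹) • ∑ s : Fin n → ZMod 2, ∑ t : Fin n → ZMod 2,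
        ((ee u s * ee u t : ℝ) : ℂ) • (A s * A t) := by
    intro u
    unfold hat
    rw [smul_mul_smul_comm, Finset.sum_mul_sum]
    congr 1
    refine Finset.sum_congr rfl fun s _ => Finset.sum_congr rfl fun t _ => ?_
    rw [smul_mul_smul_comm, Complex.ofReal_mul]
  simp_rw [expand]
  rw [← Finset.smul_sum, sum_comm3]
  have step : ∀ s t : Fin n → ZMod 2,
      (∑ u : Fin n → ZMod 2, ((ee u s * ee u t : ℝ) : ℂ) • (A s * A t))
        = (((if s = t then (2 : ℝ) ^ n else 0 : ℝ)) : ℂ) • (A s * A t) := by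
    intro s t
    rw [← Finset.sum_smul, ← Complex.ofReal_sum]
    congr 2
    simp_rw [ee_mul]
    rw [sum_ee]
    congr 1
    exact propext (hiff s t)
  simp_rw [step, apply_ite (fun r : ℝ => (r : ℂ)), Complex.ofReal_zero, ite_smul, zero_smul]
  rw [Finset.sum_congr rfl fun s _ => Finset.sum_ite_eq Finset.univ s
    (fun t => (((2 : ℝ) ^ n : ℝ) : ℂ) • (A s * A t))]
  simp only [Finset.mem_univ, if_true]
  simp_rw [hA2]
  rw [Finset.sum_const, Finset.card_univ, card_V]
  rw [← Nat.cast_smul_eq_nsmul ℂ, smul_smul, smul_smul]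
  have h : ((2 : ℂ) ^ n)⁻¹ * ((2 : ℂ) ^ n)⁻¹ * ((2 ^ n : ℕ) : ℂ) * (((2 : ℝ) ^ n : ℝ) : ℂ) = 1 := by
    push_cast
    field_simp
  rw [h, one_smul]

lemma hat_inv (A : (Fin n → ZMod 2) → Matrix ι ι ℂ) (B : (Fin n → ZMod 2) → Matrix κ κ ℂ)
    (z : Fin n → ZMod 2) :
    ∑ u : Fin n → ZMod 2, ((ee u z : ℝ) : ℂ) • (hat A u ⊗ₖ hat B u)
      = ((2 : ℂ) ^ n)⁻¹ • ∑ s : Fin n → ZMod 2, A s ⊗ₖ B (s + z) := by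
  have expand : ∀ u : Fin n → ZMod 2, ((ee u z : ℝ) : ℂ) • (hat A u ⊗ₖ hat B u)
      = (((2 : ℂ) ^ n)⁻¹ * ((2 : ℂ) ^ n)⁻¹) • ∑ s : Fin n → ZMod 2, ∑ t : Fin n → ZMod 2,
          ((ee u z * (ee u s * ee u t) : ℝ) : ℂ) • (A s ⊗ₖ B t) := by
    intro u
    unfold hat
    simp only [smul_kronecker, kronecker_smul, sum_kron, kron_sum, Finset.smul_sum,
      smul_smul, Complex.ofReal_mul]
    rw [Finset.sum_comm]
    refine Finset.sum_congr rfl fun s _ => Finset.sum_congr rfl fun t _ => ?_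
    congr 1
    ring
  simp_rw [expand]
  rw [← Finset.smul_sum, sum_comm3]
  have step : ∀ s t : Fin n → ZMod 2,
      (∑ u : Fin n → ZMod 2, ((ee u z * (ee u s * ee u t) : ℝ) : ℂ) • (A s ⊗ₖ B t))
        = (((if t = s + z then (2 : ℝ) ^ n else 0 : ℝ)) : ℂ) • (A s ⊗ₖ B t) := by
    intro s t
    rw [← Finset.sum_smul, ← Complex.ofReal_sum]
    congr 2
    simp_rw [ee_mul]
    rw [sum_ee]
    refine if_congr ?_ rfl rfl
    rw [← add_assoc, hiff (z + s) t, add_comm z s, eq_comm]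
  simp_rw [step, apply_ite (fun r : ℝ => (r : ℂ)), Complex.ofReal_zero, ite_smul, zero_smul]
  rw [Finset.sum_congr rfl fun s _ => Finset.sum_ite_eq' Finset.univ (s + z)
    (fun t => (((2 : ℝ) ^ n : ℝ) : ℂ) • (A s ⊗ₖ B t))]
  simp only [Finset.mem_univ, if_true]
  rw [← Finset.smul_sum, smul_smul]
  congr 1
  push_cast
  rw [mul_assoc, inv_mul_cancel₀ (two_pow_ne n), mul_one]

end Mat

end TXQB

namespace TXQB

section Q

set_option linter.unusedSectionVars false

variable {ι : Type} [Fintype ι] [DecidableEq ι]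

/-- The quadratic form `⟨φ| M |φ⟩`. -/
noncomputable def q (φ : ι → ℂ) (M : Matrix ι ι ℂ) : ℂ :=
  ∑ p, (starRingEnd ℂ) (φ p) * (M.mulVec φ p)

lemma sum_mulVec {σ : Type*} (F : Finset σ) (M : σ → Matrix ι ι ℂ) (v : ι → ℂ) :
    (∑ i ∈ F, M i) *ᵥ v = ∑ i ∈ F, M i *ᵥ v := by
  classical
  induction F using Finset.induction with
  | empty => simp [Matrix.zero_mulVec]
  | insert _ _ h ih => rw [Finset.sum_insert h, Finset.sum_insert h, Matrix.add_mulVec, ih]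

lemma q_smul (φ : ι → ℂ) (a : ℂ) (M : Matrix ι ι ℂ) : q φ (a • M) = a * q φ M := by
  unfold q
  rw [Finset.mul_sum]
  refine Finset.sum_congr rfl fun p _ => ?_
  rw [Matrix.smul_mulVec]
  simp only [Pi.smul_apply, smul_eq_mul]
  ring

lemma q_sum (φ : ι → ℂ) {σ : Type*} (F : Finset σ) (M : σ → Matrix ι ι ℂ) :
    q φ (∑ i ∈ F, M i) = ∑ i ∈ F, q φ (M i) := by
  unfold q
  rw [sum_mulVec]
  simp only [Finset.sum_apply, Finset.mul_sum]
  exact Finset.sum_comm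

lemma q_split (φ : ι → ℂ) (M N : Matrix ι ι ℂ) (hM : Mᴴ = M) :
    q φ (M * N) = ∑ p, (starRingEnd ℂ) ((M.mulVec φ) p) * (N.mulVec φ p) := by
  have h1 : ∀ v w : ι → ℂ, ∑ p, (starRingEnd ℂ) (v p) * w p = star v ⬝ᵥ w := by
    intro v w
    simp only [dotProduct, Pi.star_apply, starRingEnd_apply]
  rw [show q φ (M * N) = star φ ⬝ᵥ (M * N) *ᵥ φ from h1 φ _, h1,
    ← Matrix.mulVec_mulVec, Matrix.dotProduct_mulVec, Matrix.star_mulVec, hM]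

lemma q_one (φ : ι → ℂ) : q φ 1 = ∑ p, (starRingEnd ℂ) (φ p) * φ p := by
  simp [q, Matrix.one_mulVec]

lemma dot_self_re (v : ι → ℂ) :
    (∑ p, (starRingEnd ℂ) (v p) * v p) = ((∑ p, ‖v p‖ ^ 2 : ℝ) : ℂ) := by
  rw [Complex.ofReal_sum]
  refine Finset.sum_congr rfl fun p _ => ?_
  rw [mul_comm, Complex.mul_conj, Complex.normSq_eq_norm_sq]

lemma cs_step (ψ χ : ι → ℂ) :
    ‖∑ p, (starRingEnd ℂ) (ψ p) * χ p‖ ≤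
      ((∑ p, ‖ψ p‖ ^ 2) + (∑ p, ‖χ p‖ ^ 2)) / 2 := by
  let ψ' : EuclideanSpace ℂ ι := WithLp.toLp 2 ψ
  let χ' : EuclideanSpace ℂ ι := WithLp.toLp 2 χ
  have h1 : (inner ℂ ψ' χ' : ℂ) = ∑ p, (starRingEnd ℂ) (ψ p) * χ p := by
    rw [PiLp.inner_apply]
    simp [ψ', χ', RCLike.inner_apply, mul_comm]
  have h2 : ‖ψ'‖ ^ 2 = ∑ p, ‖ψ p‖ ^ 2 := by
    rw [EuclideanSpace.norm_eq, Real.sq_sqrt (by positivity)]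
  have h3 : ‖χ'‖ ^ 2 = ∑ p, ‖χ p‖ ^ 2 := by
    rw [EuclideanSpace.norm_eq, Real.sq_sqrt (by positivity)]
  have h4 : ‖(inner ℂ ψ' χ' : ℂ)‖ ≤ ‖ψ'‖ * ‖χ'‖ := by
    exact norm_inner_le_norm ψ' χ'
  rw [← h1, ← h2, ← h3]
  nlinarith [sq_nonneg (‖ψ'‖ - ‖χ'‖), h4]

end Q

end TXQB

open scoped Kronecker

/-- Quantum value bound for transversal XOR games: with `θ_z = ∑_r π(z,r)(1/2)(-1)^(g(z,r))`,
a unit vector `|φ⟩ ∈ H_A ⊗ H_B`, and `±1`-observables `A_s`, `B_t` (Hermitian with square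
the identity), the acceptance probability
`1/2 + ∑_z θ_z 2⁻ⁿ ∑_s ⟨φ|A_s ⊗ B_{s⊕z}|φ⟩` is at most
`1/2 + max_u |∑_z (-1)^(u·z) θ_z|`. -/
theorem transversal_xor_quantum_bound (n l : ℕ) (ιA ιB : Type)
    [Fintype ιA] [DecidableEq ιA] [Fintype ιB] [DecidableEq ιB]
    (π : (Fin n → ZMod 2) × (Fin l → ZMod 2) → ℝ)
    (hπ0 : ∀ p, 0 ≤ π p) (hπ1 : ∑ p, π p = 1)
    (g : (Fin n → ZMod 2) × (Fin l → ZMod 2) → ZMod 2)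
    (φ : ιA × ιB → ℂ) (hφ : ∑ p, ‖φ p‖ ^ 2 = 1)
    (A : (Fin n → ZMod 2) → Matrix ιA ιA ℂ)
    (hA : ∀ s, (A s).IsHermitian) (hA2 : ∀ s, A s * A s = 1)
    (B : (Fin n → ZMod 2) → Matrix ιB ιB ℂ)
    (hB : ∀ t, (B t).IsHermitian) (hB2 : ∀ t, B t * B t = 1)
    (θ : (Fin n → ZMod 2) → ℝ)
    (hθ : ∀ z, θ z = ∑ r : Fin l → ZMod 2,
      π (z, r) * (1 / 2) * (-1 : ℝ) ^ (g (z, r)).val) :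
    1 / 2 + ∑ z : Fin n → ZMod 2, θ z * (((2 : ℝ) ^ n)⁻¹ *
        ∑ s : Fin n → ZMod 2,
          (∑ p, (starRingEnd ℂ) (φ p) * ((A s ⊗ₖ B (s + z)).mulVec φ p)).re) ≤
      1 / 2 + Finset.univ.sup' Finset.univ_nonempty
        (fun u : Fin n → ZMod 2 =>
          |∑ z : Fin n → ZMod 2, (-1 : ℝ) ^ (∑ i, u i * z i).val * θ z|) := by
  classical
  set Ah := TXQB.hat A with hAhdef
  set Bh := TXQB.hat B with hBhdef
  -- Hermitian facts
  have hAh : ∀ u, (Ah u)ᴴ = Ah u := fun u => TXQB.hat_herm A hA u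
  have hBh : ∀ u, (Bh u)ᴴ = Bh u := fun u => TXQB.hat_herm B hB u
  have hMA : ∀ u, (Ah u ⊗ₖ (1 : Matrix ιB ιB ℂ))ᴴ = Ah u ⊗ₖ (1 : Matrix ιB ιB ℂ) := by
    intro u
    rw [TXQB.kron_conjTranspose, Matrix.conjTranspose_one, hAh u]
  have hMB : ∀ u, ((1 : Matrix ιA ιA ℂ) ⊗ₖ Bh u)ᴴ = (1 : Matrix ιA ιA ℂ) ⊗ₖ Bh u := by
    intro u
    rw [TXQB.kron_conjTranspose, Matrix.conjTranspose_one, hBh u]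
  -- Cauchy-Schwarz bound for each u
  have hsplit : ∀ u, TXQB.q φ (Ah u ⊗ₖ Bh u)
      = ∑ p, (starRingEnd ℂ) (((Ah u ⊗ₖ (1 : Matrix ιB ιB ℂ)).mulVec φ) p)
          * (((1 : Matrix ιA ιA ℂ) ⊗ₖ Bh u).mulVec φ p) := by
    intro u
    have hmul : (Ah u ⊗ₖ (1 : Matrix ιB ιB ℂ)) * ((1 : Matrix ιA ιA ℂ) ⊗ₖ Bh u)
        = Ah u ⊗ₖ Bh u := by
      rw [← Matrix.mul_kronecker_mul, mul_one, one_mul]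
    rw [← hmul, TXQB.q_split φ _ _ (hMA u)]
  have habs : ∀ u, |(TXQB.q φ (Ah u ⊗ₖ Bh u)).re| ≤
      ((∑ p, ‖((Ah u ⊗ₖ (1 : Matrix ιB ιB ℂ)).mulVec φ) p‖ ^ 2)
        + (∑ p, ‖(((1 : Matrix ιA ιA ℂ) ⊗ₖ Bh u).mulVec φ) p‖ ^ 2)) / 2 := by
    intro u
    calc |(TXQB.q φ (Ah u ⊗ₖ Bh u)).re| ≤ ‖TXQB.q φ (Ah u ⊗ₖ Bh u)‖ :=
          Complex.abs_re_le_norm _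
      _ = ‖∑ p, (starRingEnd ℂ) (((Ah u ⊗ₖ (1 : Matrix ιB ιB ℂ)).mulVec φ) p)
            * (((1 : Matrix ιA ιA ℂ) ⊗ₖ Bh u).mulVec φ p)‖ := by rw [hsplit u]
      _ ≤ _ := TXQB.cs_step _ _
  -- total norms
  have hqa : ∑ u : Fin n → ZMod 2,
      (∑ p, ‖((Ah u ⊗ₖ (1 : Matrix ιB ιB ℂ)).mulVec φ) p‖ ^ 2) = 1 := by
    have e1 : ∀ u : Fin n → ZMod 2, (∑ p, ‖((Ah u ⊗ₖ (1 : Matrix ιB ιB ℂ)).mulVec φ) p‖ ^ 2)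
        = (TXQB.q φ ((Ah u * Ah u) ⊗ₖ (1 : Matrix ιB ιB ℂ))).re := by
      intro u
      have hk := Matrix.mul_kronecker_mul (Ah u) (Ah u) (1 : Matrix ιB ιB ℂ) (1 : Matrix ιB ιB ℂ)
      rw [one_mul] at hk
      rw [hk, TXQB.q_split φ _ _ (hMA u), TXQB.dot_self_re, Complex.ofReal_re]
    calc ∑ u : Fin n → ZMod 2, (∑ p, ‖((Ah u ⊗ₖ (1 : Matrix ιB ιB ℂ)).mulVec φ) p‖ ^ 2)
        = ∑ u : Fin n → ZMod 2, (TXQB.q φ ((Ah u * Ah u) ⊗ₖ (1 : Matrix ιB ιB ℂ))).re :=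
          Finset.sum_congr rfl fun u _ => e1 u
      _ = (TXQB.q φ (∑ u : Fin n → ZMod 2, (Ah u * Ah u) ⊗ₖ (1 : Matrix ιB ιB ℂ))).re := by
          rw [TXQB.q_sum, Complex.re_sum]
      _ = 1 := by
          rw [← TXQB.sum_kron, hAhdef, TXQB.sum_hat_sq A hA2, Matrix.one_kronecker_one,
            TXQB.q_one, TXQB.dot_self_re, Complex.ofReal_re, hφ]
  have hqb : ∑ u : Fin n → ZMod 2,
      (∑ p, ‖(((1 : Matrix ιA ιA ℂ) ⊗ₖ Bh u).mulVec φ) p‖ ^ 2) = 1 := by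
    have e1 : ∀ u : Fin n → ZMod 2, (∑ p, ‖(((1 : Matrix ιA ιA ℂ) ⊗ₖ Bh u).mulVec φ) p‖ ^ 2)
        = (TXQB.q φ ((1 : Matrix ιA ιA ℂ) ⊗ₖ (Bh u * Bh u))).re := by
      intro u
      have hk := Matrix.mul_kronecker_mul (1 : Matrix ιA ιA ℂ) (1 : Matrix ιA ιA ℂ) (Bh u) (Bh u)
      rw [one_mul] at hk
      rw [hk, TXQB.q_split φ _ _ (hMB u), TXQB.dot_self_re, Complex.ofReal_re]
    calc ∑ u : Fin n → ZMod 2, (∑ p, ‖(((1 : Matrix ιA ιA ℂ) ⊗ₖ Bh u).mulVec φ) p‖ ^ 2)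
        = ∑ u : Fin n → ZMod 2, (TXQB.q φ ((1 : Matrix ιA ιA ℂ) ⊗ₖ (Bh u * Bh u))).re :=
          Finset.sum_congr rfl fun u _ => e1 u
      _ = (TXQB.q φ (∑ u : Fin n → ZMod 2, (1 : Matrix ιA ιA ℂ) ⊗ₖ (Bh u * Bh u))).re := by
          rw [TXQB.q_sum, Complex.re_sum]
      _ = 1 := by
          rw [← TXQB.kron_sum, hBhdef, TXQB.sum_hat_sq B hB2, Matrix.one_kronecker_one,
            TXQB.q_one, TXQB.dot_self_re, Complex.ofReal_re, hφ]
  -- Fourier step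
  have hq2 : ((2 : ℂ) ^ n)⁻¹ = ((((2 : ℝ) ^ n)⁻¹ : ℝ) : ℂ) := by push_cast; ring
  have key : ∀ z : Fin n → ZMod 2,
      ((2 : ℝ) ^ n)⁻¹ * ∑ s : Fin n → ZMod 2,
          (∑ p, (starRingEnd ℂ) (φ p) * ((A s ⊗ₖ B (s + z)).mulVec φ p)).re
        = ∑ u : Fin n → ZMod 2, TXQB.ee u z * (TXQB.q φ (Ah u ⊗ₖ Bh u)).re := by
    intro z
    have h1 := congrArg (TXQB.q φ) (TXQB.hat_inv A B z)
    rw [TXQB.q_sum, TXQB.q_smul, TXQB.q_sum] at h1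
    simp_rw [TXQB.q_smul] at h1
    have h2 := congrArg Complex.re h1
    rw [Complex.re_sum, hq2, Complex.re_ofReal_mul, Complex.re_sum] at h2
    simp_rw [Complex.re_ofReal_mul] at h2
    exact h2.symm
  -- rearrange the main sum
  have hmain : ∑ z : Fin n → ZMod 2, θ z * (((2 : ℝ) ^ n)⁻¹ *
        ∑ s : Fin n → ZMod 2,
          (∑ p, (starRingEnd ℂ) (φ p) * ((A s ⊗ₖ B (s + z)).mulVec φ p)).re)
      = ∑ u : Fin n → ZMod 2, (∑ z : Fin n → ZMod 2, TXQB.ee u z * θ z)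
          * (TXQB.q φ (Ah u ⊗ₖ Bh u)).re := by
    calc _ = ∑ z : Fin n → ZMod 2, θ z * ∑ u : Fin n → ZMod 2,
              TXQB.ee u z * (TXQB.q φ (Ah u ⊗ₖ Bh u)).re := by
            refine Finset.sum_congr rfl fun z _ => ?_
            rw [key z]
      _ = ∑ z : Fin n → ZMod 2, ∑ u : Fin n → ZMod 2,
              θ z * (TXQB.ee u z * (TXQB.q φ (Ah u ⊗ₖ Bh u)).re) := by
            simp_rw [Finset.mul_sum]
      _ = ∑ u : Fin n → ZMod 2, ∑ z : Fin n → ZMod 2,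
              θ z * (TXQB.ee u z * (TXQB.q φ (Ah u ⊗ₖ Bh u)).re) := Finset.sum_comm
      _ = _ := by
            refine Finset.sum_congr rfl fun u _ => ?_
            rw [Finset.sum_mul]
            exact Finset.sum_congr rfl fun z _ => by ring
  rw [hmain]
  have hsup0 : (0 : ℝ) ≤ Finset.univ.sup' Finset.univ_nonempty
      (fun u : Fin n → ZMod 2 =>
        |∑ z : Fin n → ZMod 2, (-1 : ℝ) ^ (∑ i, u i * z i).val * θ z|) :=
    le_trans (abs_nonneg _) (Finset.le_sup' (fun u : Fin n → ZMod 2 =>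
        |∑ z : Fin n → ZMod 2, (-1 : ℝ) ^ (∑ i, u i * z i).val * θ z|) (Finset.mem_univ (0 : Fin n → ZMod 2)))
  have hfinal : ∑ u : Fin n → ZMod 2, (∑ z : Fin n → ZMod 2, TXQB.ee u z * θ z)
        * (TXQB.q φ (Ah u ⊗ₖ Bh u)).re
      ≤ Finset.univ.sup' Finset.univ_nonempty
        (fun u : Fin n → ZMod 2 =>
          |∑ z : Fin n → ZMod 2, (-1 : ℝ) ^ (∑ i, u i * z i).val * θ z|) := by
    calc ∑ u : Fin n → ZMod 2, (∑ z : Fin n → ZMod 2, TXQB.ee u z * θ z)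
          * (TXQB.q φ (Ah u ⊗ₖ Bh u)).re
        ≤ ∑ u : Fin n → ZMod 2, (Finset.univ.sup' Finset.univ_nonempty
            (fun u : Fin n → ZMod 2 =>
              |∑ z : Fin n → ZMod 2, (-1 : ℝ) ^ (∑ i, u i * z i).val * θ z|))
            * (((∑ p, ‖((Ah u ⊗ₖ (1 : Matrix ιB ιB ℂ)).mulVec φ) p‖ ^ 2)
              + (∑ p, ‖(((1 : Matrix ιA ιA ℂ) ⊗ₖ Bh u).mulVec φ) p‖ ^ 2)) / 2) := by
          refine Finset.sum_le_sum fun u _ => ?_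
          refine le_trans (le_abs_self _) ?_
          rw [abs_mul]
          exact mul_le_mul (Finset.le_sup' (fun u : Fin n → ZMod 2 =>
        |∑ z : Fin n → ZMod 2, (-1 : ℝ) ^ (∑ i, u i * z i).val * θ z|) (Finset.mem_univ u)) (habs u)
            (abs_nonneg _) hsup0
      _ = (Finset.univ.sup' Finset.univ_nonempty
            (fun u : Fin n → ZMod 2 =>
              |∑ z : Fin n → ZMod 2, (-1 : ℝ) ^ (∑ i, u i * z i).val * θ z|))
            * (((∑ u : Fin n → ZMod 2,
                (∑ p, ‖((Ah u ⊗ₖ (1 : Matrix ιB ιB ℂ)).mulVec φ) p‖ ^ 2))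
              + (∑ u : Fin n → ZMod 2,
                (∑ p, ‖(((1 : Matrix ιA ιA ℂ) ⊗ₖ Bh u).mulVec φ) p‖ ^ 2))) / 2) := by
          rw [← Finset.mul_sum]
          congr 1
          rw [← Finset.sum_div, Finset.sum_add_distrib]
      _ = _ := by rw [hqa, hqb]; norm_num
  exact add_le_add_right hfinal _
end

section
/- Classical value of a transversal XOR game achieves the spectral bound: let π be a probability distribution on {0,1}^n × {0,1}^l and g : {0,1}^n × {0,1}^l → {0,1}, and set θ_z = Σ_r π(z,r)(1/2)(-1)^{g(z,r)} and λ_u = Σ_z (-1)^{u·z} θ_z. Fix w ∈ {0,1}^n achieving |λ_w| = max_u |λ_u|, and let γ = 0 if λ_w ≥ 0 and γ = 1 otherwise. If Alice answers a = (w · s) ⊕ γ on question s and Bob answers b = w · t on question t = s ⊕ z, then Pr[a ⊕ b = g(z,r)] = 1/2 + max_u |λ_u|, where the probability is over (z,r) ∼ π and s uniform and independent of (z,r). -/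
/-- Classical value of a transversal XOR game achieves the spectral bound: with
`θ_z = ∑_r π(z,r)(1/2)(-1)^(g(z,r))`, `λ_u = ∑_z (-1)^(u·z) θ_z`, `w` achieving
`|λ_w| = max_u |λ_u|`, and `γ = 0` if `λ_w ≥ 0` else `γ = 1`, the linear strategy
`a = (w·s) ⊕ γ`, `b = w·t` with `t = s ⊕ z` succeeds with probability exactly
`1/2 + max_u |λ_u|`.  (Since `a ⊕ b = (w·z) ⊕ γ`, the probability is
`∑_{z,r} π(z,r) [w·z ⊕ γ = g(z,r)]`.) -/
theorem transversal_xor_classical_value (n l : ℕ)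
    (π : (Fin n → ZMod 2) × (Fin l → ZMod 2) → ℝ)
    (hπ0 : ∀ p, 0 ≤ π p) (hπ1 : ∑ p, π p = 1)
    (g : (Fin n → ZMod 2) × (Fin l → ZMod 2) → ZMod 2)
    (θ : (Fin n → ZMod 2) → ℝ)
    (hθ : ∀ z, θ z = ∑ r : Fin l → ZMod 2,
      π (z, r) * (1 / 2) * (-1 : ℝ) ^ (g (z, r)).val)
    (lam : (Fin n → ZMod 2) → ℝ)
    (hlam : ∀ u, lam u = ∑ z : Fin n → ZMod 2,
      (-1 : ℝ) ^ (∑ i, u i * z i).val * θ z)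
    (w : Fin n → ZMod 2)
    (hw : |lam w| = Finset.univ.sup' Finset.univ_nonempty fun u => |lam u|)
    (γ : ZMod 2) (hγ : γ = if 0 ≤ lam w then 0 else 1) :
    (∑ z : Fin n → ZMod 2, ∑ r : Fin l → ZMod 2,
        if (∑ i, w i * z i) + γ = g (z, r) then π (z, r) else 0) =
      1 / 2 + Finset.univ.sup' Finset.univ_nonempty fun u => |lam u| := by
  have hc : ∀ x : ZMod 2, x = 0 ∨ x = 1 := by decide
  have v1 : (1 : ZMod 2).val = 1 := rfl
  have v2 : ((1 : ZMod 2) + 1).val = 0 := rfl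
  have hmul : ∀ x y : ZMod 2,
      ((-1 : ℝ)) ^ (x + y).val = (-1) ^ x.val * (-1) ^ y.val := by
    intro x y
    rcases hc x with hx | hx <;> rcases hc y with hy | hy <;> subst hx <;> subst hy <;>
      simp [v1, v2]
  have hind : ∀ (a b : ZMod 2) (p : ℝ),
      (if a = b then p else 0) = p * (1 / 2) + p * (1 / 2) * (-1) ^ (a + b).val := by
    intro a b p
    rcases hc a with ha | ha <;> rcases hc b with hb | hb <;> subst ha <;> subst hb <;>
      simp [v1, v2] <;> ring
  have step : (∑ z : Fin n → ZMod 2, ∑ r : Fin l → ZMod 2,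
        if (∑ i, w i * z i) + γ = g (z, r) then π (z, r) else 0)
      = (∑ z : Fin n → ZMod 2, ∑ r : Fin l → ZMod 2, π (z, r) * (1 / 2))
        + (-1 : ℝ) ^ γ.val * lam w := by
    rw [hlam, Finset.mul_sum, ← Finset.sum_add_distrib]
    refine Finset.sum_congr rfl fun z _ => ?_
    rw [hθ, Finset.mul_sum, Finset.mul_sum, ← Finset.sum_add_distrib]
    refine Finset.sum_congr rfl fun r _ => ?_
    rw [hind, hmul ((∑ i, w i * z i) + γ) (g (z, r)), hmul (∑ i, w i * z i) γ]
    ring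
  rw [step]
  have h1 : (∑ z : Fin n → ZMod 2, ∑ r : Fin l → ZMod 2, π (z, r) * (1 / 2)) = 1 / 2 := by
    simp_rw [← Finset.sum_mul]
    rw [← Fintype.sum_prod_type, hπ1, one_mul]
  have h2 : (-1 : ℝ) ^ γ.val * lam w = |lam w| := by
    by_cases h : 0 ≤ lam w
    · simp [hγ, h, abs_of_nonneg h]
    · have hg1 : γ = 1 := by simp [hγ, h]
      rw [hg1, v1, abs_of_neg (lt_of_not_ge h)]
      norm_num
  rw [h1, h2, hw]
end
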